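/- arXiv:2005.06154 — 3 statements merged into one kernel-verified Lean document; each statement's English description precedes it below -/
import Mathlib

section
/- (Exact count of admissible allocations; the paper's count n·((n−1)!−x) of all possible allocations consistent with one query.) The total number of admissible permutations σ : Equiv.Perm (Fin n) equals k^2 * Nat.descFactorial (n − k) (k − 1) * Nat.factorial (n − k). (The formula holds for all n and k, both sides being 0 when no admissible permutation exists.) -/
open Finset Equiv

-- card of perms fixing S pointwise
lemma card_fix (n : ℕ) (S : Finset (Fin n)) :
    (Finset.univ.filter (fun τ : Equiv.Perm (Fin n) => ∀ x ∈ S, τ x = x)).card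
      = Nat.factorial (n - S.card) := by
  rw [← Fintype.card_subtype]
  have e1 : {τ : Equiv.Perm (Fin n) // ∀ x ∈ S, τ x = x} ≃
      {f : Equiv.Perm (Fin n) // ∀ a, ¬ (a ∉ S) → f a = a} :=
    Equiv.subtypeEquivRight (by intro f; constructor <;> (intro h x hx; exact h x (by tauto)))
  rw [Fintype.card_congr (e1.trans (Equiv.Perm.subtypeEquivSubtypePerm (fun x => x ∉ S)).symm)]
  rw [Fintype.card_perm]
  congr 1
  rw [Fintype.card_subtype_compl, Fintype.card_coe, Fintype.card_fin]


lemma exists_perm_extend {n : ℕ} (S : Finset (Fin n)) (h : Fin n → Fin n)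
    (hinj : Set.InjOn h S) : ∃ σ : Equiv.Perm (Fin n), ∀ x ∈ S, σ x = h x := by
  classical
  set T : Finset (Fin n) := S.image h with hT
  have hcard : T.card = S.card := Finset.card_image_of_injOn hinj
  obtain ⟨e1, he1⟩ : ∃ e : {x // x ∈ S} ≃ {x // x ∈ T},
      ∀ (x : Fin n) (hx : x ∈ S), (e ⟨x, hx⟩ : Fin n) = h x := by
    refine ⟨Equiv.ofBijective (fun x => ⟨h x, Finset.mem_image_of_mem h x.2⟩) ⟨?_, ?_⟩,
      fun x hx => rfl⟩
    · rintro ⟨x, hx⟩ ⟨y, hy⟩ hxy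
      exact Subtype.ext (hinj hx hy (by simpa using hxy))
    · rintro ⟨y, hy⟩
      obtain ⟨x, hx, hxy⟩ := Finset.mem_image.mp hy
      exact ⟨⟨x, hx⟩, Subtype.ext hxy⟩
  have e2 : {x // ¬ x ∈ S} ≃ {x // ¬ x ∈ T} := by
    apply Classical.choice
    rw [← Fintype.card_eq]
    rw [Fintype.card_subtype_compl, Fintype.card_subtype_compl,
      Fintype.card_coe, Fintype.card_coe, hcard]
  refine ⟨((Equiv.sumCompl (· ∈ S)).symm.trans ((Equiv.sumCongr e1 e2).trans
    (Equiv.sumCompl (· ∈ T)))), fun x hx => ?_⟩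
  simp [Equiv.sumCompl_symm_apply_of_pos (p := (· ∈ S)) hx, he1]

lemma card_perm_extend {n : ℕ} (S : Finset (Fin n)) (h : Fin n → Fin n)
    (hinj : Set.InjOn h S) :
    (Finset.univ.filter (fun σ : Equiv.Perm (Fin n) => ∀ x ∈ S, σ x = h x)).card
      = Nat.factorial (n - S.card) := by
  classical
  obtain ⟨σ₀, hσ₀⟩ := exists_perm_extend S h hinj
  rw [← card_fix n S]
  apply Finset.card_bij' (fun σ _ => σ₀⁻¹ * σ) (fun τ _ => σ₀ * τ)
  · intro σ hσ
    simp only [Finset.mem_filter, Finset.mem_univ, true_and] at hσ ⊢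
    intro x hx
    rw [Equiv.Perm.mul_apply, hσ x hx, ← hσ₀ x hx]
    simp
  · intro τ hτ
    simp only [Finset.mem_filter, Finset.mem_univ, true_and] at hτ ⊢
    intro x hx
    rw [Equiv.Perm.mul_apply, hτ x hx, hσ₀ x hx]
  · intro σ _; group
  · intro τ _; group

lemma card_Sab (n k : ℕ) (A B : Finset (Fin n)) (hA : A.card = k) (hB : B.card = k)
    (a : Fin n) (ha : a ∈ A) (b : Fin n) (hb : b ∈ B) :
    (Finset.univ.filter (fun σ : Equiv.Perm (Fin n) =>
        σ a = b ∧ ∀ x ∈ A, x ≠ a → σ x ∉ B)).card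
      = Nat.descFactorial (n - k) (k - 1) * Nat.factorial (n - k) := by
  classical
  set A' : Finset (Fin n) := A.erase a with hA'
  have hA'card : A'.card = k - 1 := by rw [hA', Finset.card_erase_of_mem ha, hA]
  -- fiber decomposition over restrictions to A'
  rw [Finset.card_eq_sum_card_fiberwise
    (f := fun σ : Equiv.Perm (Fin n) => (fun x : A' => σ x : A' → Fin n))
    (t := Finset.univ) (fun _ _ => Finset.mem_univ _)]
  have key : ∀ g : A' → Fin n,
      ((Finset.univ.filter (fun σ : Equiv.Perm (Fin n) =>
          σ a = b ∧ ∀ x ∈ A, x ≠ a → σ x ∉ B)).filter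
        (fun σ => (fun x : A' => σ x) = g)).card
      = if (Function.Injective g ∧ ∀ x, g x ∉ B) then Nat.factorial (n - k) else 0 := by
    intro g
    rw [Finset.filter_filter]
    split_ifs with hg
    · obtain ⟨hginj, hgB⟩ := hg
      have hhg : ∀ σ : Equiv.Perm (Fin n),
          ((σ a = b ∧ ∀ x ∈ A, x ≠ a → σ x ∉ B) ∧ (fun x : A' => σ x) = g) ↔
          (∀ x ∈ A, σ x = (fun y => if hy : y ∈ A' then g ⟨y, hy⟩ else b) x) := by
        intro σ
        constructor
        · rintro ⟨⟨hab, _⟩, hres⟩ x hx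
          by_cases hx' : x ∈ A'
          · simp only [dif_pos hx']
            exact congrFun hres ⟨x, hx'⟩
          · have : x = a := by
              by_contra hxa
              exact hx' (Finset.mem_erase.mpr ⟨hxa, hx⟩)
            subst this
            show σ x = dite _ _ _
            rw [dif_neg (show x ∉ A' from Finset.notMem_erase x A)]
            exact hab
        · intro hall
          have hab : σ a = b := by
            have := hall a ha
            simpa [hA'] using this
          refine ⟨⟨hab, fun x hx hxa => ?_⟩, funext fun x => ?_⟩
          · have hx' : x ∈ A' := Finset.mem_erase.mpr ⟨hxa, hx⟩
            rw [hall x hx]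
            simp only [dif_pos hx']
            exact hgB _
          · have := hall x (Finset.mem_of_mem_erase x.2)
            simpa [x.2] using this
      rw [Finset.filter_congr (fun σ _ => (by exact_mod_cast hhg σ : _))]
      have hinj : Set.InjOn (fun y => if hy : y ∈ A' then g ⟨y, hy⟩ else b) A := by
        intro x hx y hy hxy
        simp only at hxy
        by_cases hx' : x ∈ A' <;> by_cases hy' : y ∈ A'
        · rw [dif_pos hx', dif_pos hy'] at hxy
          exact Subtype.ext_iff.mp (hginj hxy)
        · rw [dif_pos hx', dif_neg hy'] at hxy
          exact absurd (hxy ▸ hb) (hgB ⟨x, hx'⟩)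
        · rw [dif_neg hx', dif_pos hy'] at hxy
          exact absurd (hxy ▸ hb) (by exact fun h => hgB ⟨y, hy'⟩ (hxy ▸ h))
        · have hxa : x = a := by
            by_contra hc; exact hx' (Finset.mem_erase.mpr ⟨hc, hx⟩)
          have hya : y = a := by
            by_contra hc; exact hy' (Finset.mem_erase.mpr ⟨hc, hy⟩)
          rw [hxa, hya]
      rw [card_perm_extend A _ hinj, hA]
    · rw [Finset.card_eq_zero, Finset.filter_eq_empty_iff]
      rintro σ -
      rintro ⟨⟨hab, hout⟩, hres⟩
      apply hg
      constructor
      · intro x y hxy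
        rw [← hres] at *
        simp only at hxy
        exact Subtype.ext (σ.injective hxy)
      · intro x
        rw [← hres]
        exact hout x (Finset.mem_of_mem_erase x.2) (Finset.ne_of_mem_erase x.2)
  rw [Finset.sum_congr rfl (fun g _ => key g)]
  rw [Finset.sum_ite, Finset.sum_const, Finset.sum_const_zero, add_zero, smul_eq_mul]
  congr 1
  -- count good restrictions = embeddings into Bᶜ
  have : (Finset.univ.filter (fun g : A' → Fin n => Function.Injective g ∧ ∀ x, g x ∉ B)).card
      = Fintype.card (A' ↪ (Bᶜ : Finset (Fin n))) := by
    rw [← Fintype.card_subtype]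
    apply Fintype.card_congr
    refine ⟨fun g => ⟨fun x => ⟨g.1 x, by simp [g.2.2 x]⟩,
        fun x y h => g.2.1 (by simpa using Subtype.ext_iff.mp h)⟩,
      fun f => ⟨fun x => (f x : Fin n), fun x y h => f.injective (Subtype.ext h),
        fun x => Finset.mem_compl.mp (f x).2⟩, ?_, ?_⟩
    · intro g; rfl
    · intro f; rfl
  rw [this, Fintype.card_embedding_eq, Fintype.card_coe, Fintype.card_coe, hA'card,
    Finset.card_compl, Fintype.card_fin, hB]

theorem panda_admissible_count (n k : ℕ) (A B : Finset (Fin n))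
    (hA : A.card = k) (hB : B.card = k) :
    (Finset.univ.filter (fun σ : Equiv.Perm (Fin n) =>
        (A.image (σ : Fin n → Fin n) ∩ B).card = 1)).card =
    k ^ 2 * Nat.descFactorial (n - k) (k - 1) * Nat.factorial (n - k) := by
  classical
  have hsplit : (Finset.univ.filter (fun σ : Equiv.Perm (Fin n) =>
        (A.image (σ : Fin n → Fin n) ∩ B).card = 1))
      = (A ×ˢ B).biUnion (fun p => Finset.univ.filter (fun σ : Equiv.Perm (Fin n) =>
          σ p.1 = p.2 ∧ ∀ x ∈ A, x ≠ p.1 → σ x ∉ B)) := by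
    ext σ
    simp only [Finset.mem_filter, Finset.mem_univ, true_and, Finset.mem_biUnion,
      Finset.mem_product]
    constructor
    · intro hone
      obtain ⟨c, hc⟩ := Finset.card_eq_one.mp hone
      have hcmem : c ∈ A.image σ ∩ B := hc ▸ Finset.mem_singleton_self c
      obtain ⟨hcim, hcB⟩ := Finset.mem_inter.mp hcmem
      obtain ⟨a, haA, hac⟩ := Finset.mem_image.mp hcim
      refine ⟨(a, c), ⟨haA, hcB⟩, hac, fun x hx hxa hxB => ?_⟩
      have : σ x ∈ A.image σ ∩ B :=
        Finset.mem_inter.mpr ⟨Finset.mem_image_of_mem σ hx, hxB⟩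
      rw [hc, Finset.mem_singleton] at this
      exact hxa (σ.injective (this.trans hac.symm))
    · rintro ⟨⟨a, c⟩, ⟨haA, hcB⟩, hac, hout⟩
      have : A.image σ ∩ B = {σ a} := by
        ext y
        simp only [Finset.mem_inter, Finset.mem_image, Finset.mem_singleton]
        constructor
        · rintro ⟨⟨x, hx, rfl⟩, hyB⟩
          by_cases hxa : x = a
          · rw [hxa]
          · exact absurd hyB (hout x hx hxa)
        · rintro rfl
          exact ⟨⟨a, haA, rfl⟩, hac ▸ hcB⟩
      rw [this, Finset.card_singleton]
  rw [hsplit, Finset.card_biUnion]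
  · rw [Finset.sum_congr rfl (fun p hp => card_Sab n k A B hA hB p.1
      (Finset.mem_product.mp hp).1 p.2 (Finset.mem_product.mp hp).2)]
    rw [Finset.sum_const, Finset.card_product, hA, hB, smul_eq_mul, ← mul_assoc, ← sq]
  · rintro ⟨a, c⟩ hp ⟨a', c'⟩ hp' hne
    simp only [Finset.mem_coe, Finset.mem_product, Function.onFun] at hp hp' ⊢
    rw [Finset.disjoint_left]
    rintro σ hσ hσ'
    simp only [Finset.mem_filter, Finset.mem_univ, true_and] at hσ hσ'
    obtain ⟨hac, hout⟩ := hσ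
    obtain ⟨hac', hout'⟩ := hσ'
    apply hne
    have haa : a = a' := by
      by_contra hc
      exact hout a' hp'.1 (fun h => hc h.symm) (hac' ▸ hp'.2)
    simp [haa, ← hac', ← hac, haa]
end

section
/- (The adversary cannot tell which queried encrypted value is the one shared with the non-sensitive bin: each is the matched one with probability exactly 1/k.) If a ∈ A, then k times the number of admissible permutations σ with σ a ∈ B equals the total number of admissible permutations. -/
open Finset

private lemma swap_image_eq {n : ℕ} {A : Finset (Fin n)} {x a : Fin n}
    (hx : x ∈ A) (ha : a ∈ A) : A.image (Equiv.swap x a) = A := by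
  apply Finset.eq_of_subset_of_card_le
  · intro y hy
    rcases Finset.mem_image.1 hy with ⟨z, hz, rfl⟩
    by_cases h1 : z = x
    · subst h1; simpa [Equiv.swap_apply_left] using ha
    by_cases h2 : z = a
    · subst h2; simpa [Equiv.swap_apply_right] using hx
    · rwa [Equiv.swap_apply_of_ne_of_ne h1 h2]
  · rw [Finset.card_image_of_injective _ (Equiv.injective _)]

theorem panda_which_encrypted_matched (n k : ℕ) (A B : Finset (Fin n))
    (hA : A.card = k) (hB : B.card = k) (a : Fin n) (ha : a ∈ A) :
    k * (Finset.univ.filter (fun σ : Equiv.Perm (Fin n) =>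
        (A.image (σ : Fin n → Fin n) ∩ B).card = 1 ∧ σ a ∈ B)).card =
    (Finset.univ.filter (fun σ : Equiv.Perm (Fin n) =>
        (A.image (σ : Fin n → Fin n) ∩ B).card = 1)).card := by
  classical
  set f : Fin n → ℕ := fun x => (Finset.univ.filter (fun σ : Equiv.Perm (Fin n) =>
      (A.image (σ : Fin n → Fin n) ∩ B).card = 1 ∧ σ x ∈ B)).card with hf
  -- image of A under σ * swap equals image under σ
  have himg : ∀ (x : Fin n), x ∈ A → ∀ σ : Equiv.Perm (Fin n),
      A.image ((σ * Equiv.swap x a : Equiv.Perm (Fin n)) : Fin n → Fin n) = A.image σ := by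
    intro x hx σ
    have : ((σ * Equiv.swap x a : Equiv.Perm (Fin n)) : Fin n → Fin n)
        = (σ : Fin n → Fin n) ∘ (Equiv.swap x a) := rfl
    rw [this, ← Finset.image_image, swap_image_eq hx ha]
  -- f is constant on A
  have hconst : ∀ x ∈ A, f x = f a := by
    intro x hx
    simp only [hf]
    apply Finset.card_bij' (fun σ _ => σ * Equiv.swap x a) (fun σ _ => σ * Equiv.swap x a)
    · intro σ hσ
      simp only [mem_filter, mem_univ, true_and] at hσ ⊢
      refine ⟨by rw [himg x hx]; exact hσ.1, ?_⟩
      simpa using hσ.2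
    · intro σ hσ
      simp only [mem_filter, mem_univ, true_and] at hσ ⊢
      refine ⟨by rw [himg x hx]; exact hσ.1, ?_⟩
      simpa using hσ.2
    · intro σ _; simp [mul_assoc]
    · intro σ _; simp [mul_assoc]
  -- each admissible σ has exactly one x ∈ A with σ x ∈ B
  have hcount : ∀ σ : Equiv.Perm (Fin n), (A.image (σ : Fin n → Fin n) ∩ B).card = 1 →
      (A.filter fun x => σ x ∈ B).card = 1 := by
    intro σ hσ
    have : (A.filter fun x => σ x ∈ B).image (σ : Fin n → Fin n)
        = A.image (σ : Fin n → Fin n) ∩ B := by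
      ext y
      simp only [Finset.mem_image, Finset.mem_filter, Finset.mem_inter]
      constructor
      · rintro ⟨z, ⟨hz, hzB⟩, rfl⟩; exact ⟨⟨z, hz, rfl⟩, hzB⟩
      · rintro ⟨⟨z, hz, rfl⟩, hyB⟩; exact ⟨z, ⟨hz, hyB⟩, rfl⟩
    rw [← hσ, ← this, Finset.card_image_of_injective _ (Equiv.injective _)]
  -- sum of f over A equals total
  have hsum : ∑ x ∈ A, f x = (Finset.univ.filter (fun σ : Equiv.Perm (Fin n) =>
      (A.image (σ : Fin n → Fin n) ∩ B).card = 1)).card := by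
    have : ∀ x : Fin n, f x = ∑ σ ∈ Finset.univ.filter (fun σ : Equiv.Perm (Fin n) =>
        (A.image (σ : Fin n → Fin n) ∩ B).card = 1), if σ x ∈ B then 1 else 0 := by
      intro x
      show (Finset.univ.filter (fun σ : Equiv.Perm (Fin n) =>
          (A.image (σ : Fin n → Fin n) ∩ B).card = 1 ∧ σ x ∈ B)).card = _
      rw [← Finset.filter_filter, Finset.card_filter]
    rw [Finset.sum_congr rfl (fun x _ => this x), Finset.sum_comm]
    rw [Finset.card_eq_sum_ones]
    apply Finset.sum_congr rfl
    intro σ hσ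
    simp only [mem_filter, mem_univ, true_and] at hσ
    rw [← Finset.card_filter]
    exact hcount σ hσ
  calc k * f a = ∑ x ∈ A, f a := by rw [Finset.sum_const, hA, smul_eq_mul]
  _ = ∑ x ∈ A, f x := Finset.sum_congr rfl (fun x hx => (hconst x hx).symm)
  _ = _ := hsum
end

section
/- (The adversary cannot tell which queried cleartext value is the one shared with the sensitive bin: each is the matched one with probability exactly 1/k.) If b ∈ B, then k times the number of admissible permutations σ with b ∈ A.image σ equals the total number of admissible permutations. -/
open Finset

lemma panda_swap_inter {n : ℕ} (B S : Finset (Fin n)) (b b' : Fin n) (hb : b ∈ B) (hb' : b' ∈ B)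
    (h : S ∩ B = {b}) : (S.image (Equiv.swap b b' : Fin n → Fin n)) ∩ B = {b'} := by
  ext x
  simp only [Finset.mem_inter, Finset.mem_image, Finset.mem_singleton]
  constructor
  · rintro ⟨⟨y, hy, rfl⟩, hxB⟩
    rcases eq_or_ne y b with rfl | hyb
    · simp [Equiv.swap_apply_left]
    rcases eq_or_ne y b' with rfl | hyb'
    · have hmem : y ∈ S ∩ B := Finset.mem_inter.2 ⟨hy, hb'⟩
      rw [h, Finset.mem_singleton] at hmem
      exact absurd hmem hyb
    · have hsw : Equiv.swap b b' y = y := Equiv.swap_apply_of_ne_of_ne hyb hyb'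
      rw [hsw] at hxB ⊢
      have hmem : y ∈ S ∩ B := Finset.mem_inter.2 ⟨hy, hxB⟩
      rw [h, Finset.mem_singleton] at hmem
      exact absurd hmem hyb
  · rintro rfl
    have hbS : b ∈ S := by
      have : b ∈ S ∩ B := by rw [h]; simp
      exact (Finset.mem_inter.1 this).1
    exact ⟨⟨b, hbS, Equiv.swap_apply_left _ _⟩, hb'⟩

lemma panda_count_eq {n : ℕ} (A B : Finset (Fin n)) (b b' : Fin n) (hb : b ∈ B) (hb' : b' ∈ B) :
    (Finset.univ.filter (fun σ : Equiv.Perm (Fin n) => A.image (σ : Fin n → Fin n) ∩ B = {b})).card =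
    (Finset.univ.filter (fun σ : Equiv.Perm (Fin n) => A.image (σ : Fin n → Fin n) ∩ B = {b'})).card := by
  have himg : ∀ σ : Equiv.Perm (Fin n),
      A.image ((Equiv.swap b b' * σ : Equiv.Perm (Fin n)) : Fin n → Fin n)
        = (A.image (σ : Fin n → Fin n)).image (Equiv.swap b b' : Fin n → Fin n) := by
    intro σ
    rw [Finset.image_image]
    rfl
  apply Finset.card_bij' (fun σ _ => Equiv.swap b b' * σ) (fun σ _ => Equiv.swap b b' * σ)
  · intro σ hσ
    simp only [Finset.mem_filter, Finset.mem_univ, true_and] at hσ ⊢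
    rw [himg]
    exact panda_swap_inter B _ b b' hb hb' hσ
  · intro σ hσ
    simp only [Finset.mem_filter, Finset.mem_univ, true_and] at hσ ⊢
    rw [himg, Equiv.swap_comm]
    exact panda_swap_inter B _ b' b hb' hb hσ
  · intro σ _
    rw [← mul_assoc, Equiv.swap_mul_self, one_mul]
  · intro σ _
    rw [← mul_assoc, Equiv.swap_mul_self, one_mul]

theorem panda_which_cleartext_matched (n k : ℕ) (A B : Finset (Fin n))
    (hA : A.card = k) (hB : B.card = k) (b : Fin n) (hb : b ∈ B) :
    k * (Finset.univ.filter (fun σ : Equiv.Perm (Fin n) =>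
        (A.image (σ : Fin n → Fin n) ∩ B).card = 1 ∧ b ∈ A.image (σ : Fin n → Fin n))).card =
    (Finset.univ.filter (fun σ : Equiv.Perm (Fin n) =>
        (A.image (σ : Fin n → Fin n) ∩ B).card = 1)).card := by
  classical
  have hleft : (Finset.univ.filter (fun σ : Equiv.Perm (Fin n) =>
      (A.image (σ : Fin n → Fin n) ∩ B).card = 1 ∧ b ∈ A.image (σ : Fin n → Fin n)))
      = Finset.univ.filter (fun σ : Equiv.Perm (Fin n) => A.image (σ : Fin n → Fin n) ∩ B = {b}) := by
    apply Finset.filter_congr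
    intro σ _
    constructor
    · rintro ⟨h1, h2⟩
      obtain ⟨c, hc⟩ := Finset.card_eq_one.1 h1
      have hbc : b ∈ A.image (σ : Fin n → Fin n) ∩ B := Finset.mem_inter.2 ⟨h2, hb⟩
      rw [hc, Finset.mem_singleton] at hbc
      rw [hc, hbc]
    · intro h
      refine ⟨by rw [h]; simp, ?_⟩
      have : b ∈ A.image (σ : Fin n → Fin n) ∩ B := by rw [h]; simp
      exact (Finset.mem_inter.1 this).1
  have hright : (Finset.univ.filter (fun σ : Equiv.Perm (Fin n) =>
      (A.image (σ : Fin n → Fin n) ∩ B).card = 1))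
      = B.biUnion (fun b' => Finset.univ.filter
          (fun σ : Equiv.Perm (Fin n) => A.image (σ : Fin n → Fin n) ∩ B = {b'})) := by
    ext σ
    simp only [Finset.mem_filter, Finset.mem_univ, true_and, Finset.mem_biUnion]
    constructor
    · intro h1
      obtain ⟨c, hc⟩ := Finset.card_eq_one.1 h1
      have hcB : c ∈ B := by
        have : c ∈ A.image (σ : Fin n → Fin n) ∩ B := by rw [hc]; simp
        exact (Finset.mem_inter.1 this).2
      exact ⟨c, hcB, hc⟩
    · rintro ⟨c, _, hc⟩
      rw [hc]; simp
  rw [hleft, hright, Finset.card_biUnion]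
  · rw [Finset.sum_congr rfl (fun b' hb' => panda_count_eq A B b' b hb' hb),
      Finset.sum_const, hB, smul_eq_mul]
  · intro x hx y hy hxy
    simp only [Finset.disjoint_left, Finset.mem_filter, Finset.mem_univ, true_and]
    rintro σ h1 h2
    rw [h1] at h2
    exact hxy (Finset.singleton_injective h2)
end
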